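/- Let f : D → ℝ be a non-decreasing continuous piecewise linear function on an interval D, let ε > 0, and let g : D → ℝ be a line segment (an affine function restricted to a subinterval [t_a, t_b] ⊆ D) such that f(t) ≤ g(t) ≤ f(t) + ε for all t ∈ [t_a, t_b], and among all such line segments connecting two fixed vertical fibers, g has maximal slope. Then g is non-decreasing. -/
import Mathlib


/-- if `g x = m * x + q` is a line segment in the corridor between a
non-decreasing continuous piecewise linear `f` and `f + ε` on `[ta, tb]`, with
maximal slope among all such segments connecting the two vertical fibers at `ta`
and `tb`, then `g` is non-decreasing, i.e. `0 ≤ m`. -/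
theorem maximal_slope_segment_nondecreasing
    (f : ℝ → ℝ) (ta tb ε m q : ℝ) (hab : ta < tb) (hε : 0 < ε)
    (hmono : MonotoneOn f (Set.Icc ta tb)) (hcont : ContinuousOn f (Set.Icc ta tb))
    (hpl : ∃ B : Finset ℝ, ∀ x ∈ Set.Icc ta tb, x ∉ B →
      ∃ ε' > 0, ∃ m' q' : ℝ, ∀ y ∈ Set.Icc ta tb, |y - x| < ε' → f y = m' * y + q')
    (hin : ∀ t ∈ Set.Icc ta tb, f t ≤ m * t + q ∧ m * t + q ≤ f t + ε)
    (hmax : ∀ m' q' : ℝ,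
      (∀ t ∈ Set.Icc ta tb, f t ≤ m' * t + q' ∧ m' * t + q' ≤ f t + ε) → m' ≤ m) :
    0 ≤ m := by
  by_contra hneg
  push_neg at hneg
  have hta : ta ∈ Set.Icc ta tb := ⟨le_refl _, hab.le⟩
  have htb : tb ∈ Set.Icc ta tb := ⟨hab.le, le_refl _⟩
  -- since m < 0, the segment is decreasing, so f tb ≤ f ta + ε
  have hdec : m * tb + q ≤ m * ta + q := by nlinarith
  have hkey : f tb ≤ f ta + ε :=
    le_trans (hin tb htb).1 (le_trans hdec (hin ta hta).2)
  -- the horizontal segment at height f tb fits in the corridor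
  have h0 : (0 : ℝ) ≤ m := by
    apply hmax 0 (f tb)
    intro t ht
    constructor
    · simpa using hmono ht htb ht.2
    · have : f ta ≤ f t := hmono hta ht ht.1
      simp only [zero_mul, zero_add]
      linarith
  linarith
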